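/- arXiv:1711.05136 — 3 statements merged into one kernel-verified Lean document; each statement's English description precedes it below -/
import Mathlib

section
/- Let Θ be a measurable space, let 𝒳 be a finite nonempty set, and let C : Θ → 𝒳 → Prop be such that {θ : C θ c} is measurable for each c ∈ 𝒳 and such that for every θ ∈ Θ the set {c ∈ 𝒳 : C θ c} is nonempty. Let π be a finite measure on Θ with L(c) := π({θ : C θ c}) > 0 for every c ∈ 𝒳, and for c ∈ 𝒳 let ν_c be the probability measure ν_c(A) = π(A ∩ {θ : C θ c}) / L(c). Let κ : 𝒳 → Kernel(Θ, Θ) be any family of Markov kernels such that ν_c is invariant under κ(c) for every c ∈ 𝒳 (i.e., ν_c.bind(κ c) = ν_c). Define the Markov kernel T_c from Θ to 𝒳 by T_c(θ) = the uniform distribution on {c ∈ 𝒳 : C θ c}, and define the compound Markov kernel T on Θ × 𝒳 by: given (θ', c'), first sample θ according to κ(c')(θ'), then sample c according to T_c(θ), and output (θ, c). Then the probability measure p* on Θ × 𝒳 defined by p*(A × {c}) = π(A ∩ {θ : C θ c}) / (Σ_{c' ∈ 𝒳} L(c')) for measurable A ⊆ Θ and c ∈ 𝒳 is invariant under T, i.e.,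 p*.bind(T) = p*. -/
open MeasureTheory ProbabilityTheory
open scoped ENNReal

lemma deepR_ext_of_rect {Θ 𝒳 : Type*} [MeasurableSpace Θ] [MeasurableSpace 𝒳]
    [MeasurableSingletonClass 𝒳] [Fintype 𝒳]
    {μ ν : Measure (Θ × 𝒳)}
    (h : ∀ (A : Set Θ) (c : 𝒳), MeasurableSet A → μ (A ×ˢ ({c} : Set 𝒳)) = ν (A ×ˢ ({c} : Set 𝒳))) :
    μ = ν := by
  ext S hS
  have hdecomp : S = ⋃ c : 𝒳, ((fun θ => (θ, c)) ⁻¹' S) ×ˢ ({c} : Set 𝒳) := by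
    ext ⟨θ, c⟩
    constructor
    · intro hmem
      exact Set.mem_iUnion.mpr ⟨c, hmem, rfl⟩
    · intro hmem
      obtain ⟨c', hc'⟩ := Set.mem_iUnion.mp hmem
      obtain ⟨h1, h2⟩ := hc'
      simp only [Set.mem_singleton_iff] at h2
      subst h2
      exact h1
  have hmeas : ∀ c : 𝒳, MeasurableSet (((fun θ => (θ, c)) ⁻¹' S) ×ˢ ({c} : Set 𝒳)) :=
    fun c => (hS.preimage measurable_prodMk_right).prod (measurableSet_singleton c)
  have hdisj : Pairwise (Function.onFun Disjoint
      fun c : 𝒳 => ((fun θ => (θ, c)) ⁻¹' S) ×ˢ ({c} : Set 𝒳)) := by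
    intro c c' hne
    simp only [Function.onFun, Set.disjoint_left]
    rintro ⟨θ, x⟩ ⟨-, hx⟩ ⟨-, hx'⟩
    simp only [Set.mem_singleton_iff] at hx hx'
    exact hne (hx.symm.trans hx')
  rw [hdecomp, measure_iUnion hdisj hmeas, measure_iUnion hdisj hmeas]
  exact tsum_congr fun c => h _ c (hS.preimage measurable_prodMk_right)

/-- **Invariance of the joint stationary distribution of DEEP R (compound operator).**
`Θ` is the parameter space, `𝒳` the finite nonempty set of connectivity constraints,
`C θ c` the compatibility predicate, `π` the (unnormalized tempered posterior) finite
measure, `L c = π {θ | C θ c}`, `ν c` the conditioned posterior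
`ν c = (L c)⁻¹ • π.restrict {θ | C θ c}`, and `κ c` a Markov kernel leaving `ν c`
invariant.  `Tc θ` is the uniform distribution on the constraints compatible with `θ`,
and the compound operator `T` first evolves `θ` by `κ c'` and then resamples `c` from
`Tc θ`.  The joint measure `pstar`, characterized on rectangles by
`pstar (A ×ˢ {c}) = π (A ∩ {θ | C θ c}) / ∑ c', L c'`, is invariant under `T`. -/
theorem deepR_compound_operator_invariance
    {Θ 𝒳 : Type*} [MeasurableSpace Θ] [MeasurableSpace 𝒳] [MeasurableSingletonClass 𝒳]
    [Fintype 𝒳] [Nonempty 𝒳]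
    (C : Θ → 𝒳 → Prop) [∀ θ c, Decidable (C θ c)]
    (hCmeas : ∀ c, MeasurableSet {θ | C θ c})
    (hCne : ∀ θ, ∃ c, C θ c)
    (π : Measure Θ) [IsFiniteMeasure π]
    (L : 𝒳 → ℝ≥0∞) (hL : ∀ c, L c = π {θ | C θ c}) (hLpos : ∀ c, 0 < L c)
    (ν : 𝒳 → Measure Θ) (hν : ∀ c, ν c = (L c)⁻¹ • π.restrict {θ | C θ c})
    (κ : 𝒳 → Kernel Θ Θ) [∀ c, IsMarkovKernel (κ c)]
    (hinv : ∀ c, (ν c).bind (κ c) = ν c)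
    (Tc : Θ → Measure 𝒳)
    (hTc : ∀ θ, Tc θ = ((Finset.univ.filter (fun c => C θ c)).card : ℝ≥0∞)⁻¹ •
        ∑ c ∈ Finset.univ.filter (fun c => C θ c), Measure.dirac c)
    (T : Θ × 𝒳 → Measure (Θ × 𝒳))
    (hT : ∀ q : Θ × 𝒳, T q = (κ q.2 q.1).bind (fun θ => (Tc θ).map (fun c => (θ, c))))
    (pstar : Measure (Θ × 𝒳)) [IsProbabilityMeasure pstar]
    (hpstar : ∀ (A : Set Θ) (c : 𝒳), MeasurableSet A →
        pstar (A ×ˢ ({c} : Set 𝒳)) = π (A ∩ {θ | C θ c}) / ∑ c', L c') :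
    pstar.bind T = pstar := by
  classical
  set Z : ℝ≥0∞ := ∑ c', L c' with hZdef
  have hLfin : ∀ c, L c ≠ ∞ := fun c => by rw [hL c]; exact measure_ne_top π _
  have hLne : ∀ c, L c ≠ 0 := fun c => (hLpos c).ne'
  -- the counting function
  set n : Θ → ℝ≥0∞ := fun θ => ((Finset.univ.filter (fun c => C θ c)).card : ℝ≥0∞) with hndef
  have hn_eq : ∀ θ, n θ = ∑ c : 𝒳, if C θ c then (1 : ℝ≥0∞) else 0 := by
    intro θ
    simp only [hndef, Finset.card_filter]
    push_cast
    rfl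
  have hn_meas : Measurable n := by
    rw [funext hn_eq]
    exact Finset.measurable_sum _ fun c _ =>
      Measurable.ite (hCmeas c) measurable_const measurable_const
  have hn_ne : ∀ θ, n θ ≠ 0 := by
    intro θ
    obtain ⟨c, hc⟩ := hCne θ
    exact Nat.cast_ne_zero.mpr
      (Finset.card_ne_zero_of_mem (Finset.mem_filter.mpr ⟨Finset.mem_univ c, hc⟩))
  have hn_fin : ∀ θ, n θ ≠ ∞ := fun θ => ENNReal.natCast_ne_top _
  -- value of Tc on arbitrary sets
  have hTcApp : ∀ (θ : Θ) (t : Set 𝒳),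
      Tc θ t = (n θ)⁻¹ * ∑ c : 𝒳, if C θ c ∧ c ∈ t then (1 : ℝ≥0∞) else 0 := by
    intro θ t
    have ht : MeasurableSet t := t.toFinite.measurableSet
    rw [hTc θ, Measure.smul_apply, Measure.finset_sum_apply]
    simp only [smul_eq_mul]
    congr 1
    rw [Finset.sum_filter]
    refine Finset.sum_congr rfl fun c _ => ?_
    rw [Measure.dirac_apply' _ ht]
    by_cases h1 : C θ c <;> by_cases h2 : c ∈ t <;> simp [h1, h2]
  -- the second-step kernel as a function
  set g : Θ → Measure (Θ × 𝒳) := fun θ => (Tc θ).map (fun c => (θ, c)) with hgdef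
  have hg_coe : ∀ (θ : Θ) (S : Set (Θ × 𝒳)), MeasurableSet S →
      g θ S = (n θ)⁻¹ * ∑ c : 𝒳, if C θ c ∧ (θ, c) ∈ S then (1 : ℝ≥0∞) else 0 := by
    intro θ S hS
    rw [hgdef]
    rw [Measure.map_apply measurable_prodMk_left hS, hTcApp]
    rfl
  have hg_meas : Measurable g := by
    apply Measure.measurable_of_measurable_coe
    intro S hS
    have : (fun θ => g θ S) =
        fun θ => (n θ)⁻¹ * ∑ c : 𝒳, if C θ c ∧ (θ, c) ∈ S then (1 : ℝ≥0∞) else 0 :=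
      funext fun θ => hg_coe θ S hS
    rw [this]
    refine (hn_meas.inv).mul (Finset.measurable_sum _ fun c _ => ?_)
    have hmset : MeasurableSet {θ : Θ | C θ c ∧ (θ, c) ∈ S} :=
      (hCmeas c).inter (hS.preimage measurable_prodMk_right)
    exact Measurable.ite hmset measurable_const measurable_const
  have hT_meas : Measurable T := by
    have hTfun : T = fun q : Θ × 𝒳 => Measure.bind (κ q.2 q.1) g := funext hT
    rw [hTfun]
    exact (Measure.measurable_bind' hg_meas).comp
      (measurable_from_prod_countable_left fun c => (κ c).measurable)
  -- restrict identity
  have hres : ∀ c', π.restrict {θ | C θ c'} = L c' • ν c' := by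
    intro c'
    rw [hν c', smul_smul, ENNReal.mul_inv_cancel (hLne c') (hLfin c'), one_smul]
  -- flattened form of pstar
  have hpflat : pstar = Z⁻¹ • ∑ c' : 𝒳, (π.restrict {θ | C θ c'}).map (fun θ => (θ, c')) := by
    refine deepR_ext_of_rect fun A c hA => ?_
    rw [hpstar A c hA, Measure.smul_apply, Measure.finset_sum_apply]
    have hterm : ∀ c' : 𝒳,
        ((π.restrict {θ | C θ c'}).map (fun θ => (θ, c'))) (A ×ˢ ({c} : Set 𝒳))
          = if c' = c then π (A ∩ {θ | C θ c}) else 0 := by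
      intro c'
      rw [Measure.map_apply measurable_prodMk_right (hA.prod (measurableSet_singleton c))]
      by_cases h : c' = c
      · subst h
        have hpre : (fun θ => (θ, c')) ⁻¹' (A ×ˢ ({c'} : Set 𝒳)) = A := by
          ext θ; simp
        rw [hpre, if_pos rfl, Measure.restrict_apply hA]
      · have hpre : (fun θ => (θ, c')) ⁻¹' (A ×ˢ ({c} : Set 𝒳)) = ∅ := by
          ext θ
          simp only [Set.mem_preimage, Set.mem_prod, Set.mem_singleton_iff,
            Set.mem_empty_iff_false, iff_false, not_and]
          exact fun _ => h
        rw [hpre, if_neg h]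
        exact measure_empty
    rw [Finset.sum_congr rfl fun c' _ => hterm c', Finset.sum_ite_eq' Finset.univ c
      fun _ => π (A ∩ {θ | C θ c})]
    simp [ENNReal.div_eq_inv_mul]
  -- main computation
  refine deepR_ext_of_rect fun A c hA => ?_
  have hSmeas : MeasurableSet (A ×ˢ ({c} : Set 𝒳)) := hA.prod (measurableSet_singleton c)
  -- the function integrated against the kernel
  set f : Θ → ℝ≥0∞ := fun θ => if θ ∈ A ∩ {θ | C θ c} then (n θ)⁻¹ else 0 with hfdef
  have hf_meas : Measurable f :=
    Measurable.ite (hA.inter (hCmeas c)) hn_meas.inv measurable_const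
  have hgS : ∀ θ, g θ (A ×ˢ ({c} : Set 𝒳)) = f θ := by
    intro θ
    rw [hg_coe θ _ hSmeas]
    by_cases hmem : θ ∈ A ∩ {θ | C θ c}
    · have hf : f θ = (n θ)⁻¹ := if_pos hmem
      rw [hf]
      refine Eq.trans (congrArg (fun x => (n θ)⁻¹ * x)
        ((Finset.sum_eq_single_of_mem c (Finset.mem_univ c)
            (fun b _ hb => if_neg fun hcontra =>
              hb (Set.mem_singleton_iff.mp (Set.mem_prod.mp hcontra.2).2))).trans
          (if_pos ⟨hmem.2, Set.mem_prod.mpr ⟨hmem.1, Set.mem_singleton c⟩⟩))) (mul_one _)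
    · have hf : f θ = 0 := if_neg hmem
      rw [hf]
      refine Eq.trans (congrArg (fun x => (n θ)⁻¹ * x)
        (Finset.sum_eq_zero fun b _ => ?_)) (mul_zero _)
      refine if_neg fun hcontra => hmem ?_
      obtain ⟨hCb, hmem2⟩ := hcontra
      obtain ⟨hbA, hbc⟩ := Set.mem_prod.mp hmem2
      have hb : b = c := Set.mem_singleton_iff.mp hbc
      subst hb
      exact ⟨hbA, hCb⟩
  have hTval : ∀ (θ' : Θ) (c' : 𝒳),
      T (θ', c') (A ×ˢ ({c} : Set 𝒳)) = ∫⁻ θ, f θ ∂(κ c' θ') := by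
    intro θ' c'
    rw [hT (θ', c')]
    rw [Measure.bind_apply hSmeas hg_meas.aemeasurable]
    exact lintegral_congr fun θ => hgS θ
  calc pstar.bind T (A ×ˢ ({c} : Set 𝒳))
      = ∫⁻ q, T q (A ×ˢ ({c} : Set 𝒳)) ∂pstar := Measure.bind_apply hSmeas hT_meas.aemeasurable
    _ = Z⁻¹ * ∑ c' : 𝒳, ∫⁻ q, T q (A ×ˢ ({c} : Set 𝒳))
          ∂((π.restrict {θ | C θ c'}).map (fun θ => (θ, c'))) := by
        rw [hpflat, lintegral_smul_measure, lintegral_finset_sum_measure, smul_eq_mul]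
    _ = Z⁻¹ * ∑ c' : 𝒳, ∫⁻ θ, ({θ | C θ c'}).indicator f θ ∂π := by
        congr 1
        refine Finset.sum_congr rfl fun c' _ => ?_
        have hF : Measurable (fun q : Θ × 𝒳 => T q (A ×ˢ ({c} : Set 𝒳))) :=
          (Measure.measurable_coe hSmeas).comp hT_meas
        rw [lintegral_map hF measurable_prodMk_right]
        calc ∫⁻ θ', T (θ', c') (A ×ˢ ({c} : Set 𝒳)) ∂(π.restrict {θ | C θ c'})
            = ∫⁻ θ', ∫⁻ θ, f θ ∂(κ c' θ') ∂(π.restrict {θ | C θ c'}) :=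
              lintegral_congr fun θ' => hTval θ' c'
          _ = L c' * ∫⁻ θ', ∫⁻ θ, f θ ∂(κ c' θ') ∂(ν c') := by
              rw [hres c', lintegral_smul_measure, smul_eq_mul]
          _ = L c' * ∫⁻ θ, f θ ∂((ν c').bind (κ c')) := by
              rw [Measure.lintegral_bind (κ c').measurable.aemeasurable hf_meas.aemeasurable]
          _ = L c' * ∫⁻ θ, f θ ∂(ν c') := by rw [hinv c']
          _ = ∫⁻ θ, f θ ∂(π.restrict {θ | C θ c'}) := by
              rw [hres c', lintegral_smul_measure, smul_eq_mul]
          _ = ∫⁻ θ, ({θ | C θ c'}).indicator f θ ∂π := by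
              rw [lintegral_indicator (hCmeas c')]
    _ = Z⁻¹ * ∫⁻ θ, ∑ c' : 𝒳, ({θ | C θ c'}).indicator f θ ∂π := by
        rw [lintegral_finset_sum _ fun c' _ => hf_meas.indicator (hCmeas c')]
    _ = Z⁻¹ * ∫⁻ θ, (A ∩ {θ | C θ c}).indicator 1 θ ∂π := by
        congr 1
        refine lintegral_congr fun θ => ?_
        have h1 : (∑ c' : 𝒳, ({θ | C θ c'}).indicator f θ) = n θ * f θ := by
          simp only [Set.indicator_apply, Set.mem_setOf_eq]
          rw [hn_eq θ, Finset.sum_mul]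
          refine Finset.sum_congr rfl fun c' _ => ?_
          by_cases h : C θ c' <;> simp [h]
        rw [h1, Set.indicator_apply, Pi.one_apply]
        by_cases h : θ ∈ A ∩ {θ | C θ c}
        · have hf : f θ = (n θ)⁻¹ := if_pos h
          rw [hf, if_pos h]
          exact ENNReal.mul_inv_cancel (hn_ne θ) (hn_fin θ)
        · have hf : f θ = 0 := if_neg h
          rw [hf, if_neg h, mul_zero]
    _ = Z⁻¹ * π (A ∩ {θ | C θ c}) := by
        rw [lintegral_indicator_one (hA.inter (hCmeas c))]
    _ = pstar (A ×ˢ ({c} : Set 𝒳)) := by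
        rw [hpstar A c hA, ENNReal.div_eq_inv_mul]
end

section
/- Let Θ be a measurable space, let 𝒳 be a finite nonempty set, and let C : Θ → 𝒳 → Prop be such that {θ : C θ c} is measurable for each c ∈ 𝒳 and such that for every θ ∈ Θ the set {c ∈ 𝒳 : C θ c} is nonempty. Let π be a finite measure on Θ with L(c) := π({θ : C θ c}) > 0 for every c ∈ 𝒳, and define the probability measure p* on Θ × 𝒳 by p*(A × {c}) = π(A ∩ {θ : C θ c}) / (Σ_{c' ∈ 𝒳} L(c')) for measurable A ⊆ Θ and c ∈ 𝒳. Define the Markov kernel T₂ on Θ × 𝒳 by T₂(θ, c') = δ_θ ⊗ (uniform distribution on {c ∈ 𝒳 : C θ c}) (i.e., the parameter component is kept fixed and the constraint component is resampled uniformly among constraints compatible with θ). Then p* is invariant under T₂, i.e., p*.bind(T₂) = p*. -/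
open MeasureTheory
open scoped ENNReal

/-- Any measurable set in `Θ × 𝒳` with `𝒳` finite decomposes into slices. -/
lemma deepR_slice_decomp {Θ 𝒳 : Type*} [MeasurableSpace Θ] [MeasurableSpace 𝒳]
    [MeasurableSingletonClass 𝒳] [Fintype 𝒳]
    (μ : Measure (Θ × 𝒳)) {s : Set (Θ × 𝒳)} (hs : MeasurableSet s) :
    μ s = ∑ c : 𝒳, μ (((fun θ => (θ, c)) ⁻¹' s) ×ˢ ({c} : Set 𝒳)) := by
  have hu : s = ⋃ c ∈ (Finset.univ : Finset 𝒳),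
      ((fun θ => (θ, c)) ⁻¹' s) ×ˢ ({c} : Set 𝒳) := by
    ext ⟨θ, c⟩
    simp only [Set.mem_iUnion, Set.mem_prod, Set.mem_preimage, Set.mem_singleton_iff,
      Finset.mem_univ, exists_prop, true_and]
    exact ⟨fun h => ⟨c, h, rfl⟩, by rintro ⟨c', h, rfl⟩; exact h⟩
  conv_lhs => rw [hu]
  rw [measure_biUnion_finset]
  · intro c _ c' _ hcc'
    refine Set.disjoint_left.2 ?_
    rintro ⟨θ, x⟩ hx hx'
    exact hcc' (hx.2.symm.trans hx'.2)
  · intro c _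
    exact ((measurable_prodMk_right hs)).prod (measurableSet_singleton c)

/-- **Invariance of the joint stationary distribution under the rewiring operator.**
`Θ` is the parameter space, `𝒳` the finite nonempty set of connectivity constraints,
`C θ c` the compatibility predicate, `π` the (unnormalized tempered posterior) finite
measure with `L c = π {θ | C θ c} > 0`, and `pstar` the joint measure on `Θ × 𝒳`
characterized on rectangles by `pstar (A ×ˢ {c}) = π (A ∩ {θ | C θ c}) / ∑ c', L c'`.
The rewiring kernel `T₂ (θ, c') = δ_θ ⊗ (uniform on {c | C θ c})` keeps the parameter
fixed and resamples the constraint uniformly among compatible ones; it leaves `pstar`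
invariant. -/
theorem deepR_rewiring_operator_invariance
    {Θ 𝒳 : Type*} [MeasurableSpace Θ] [MeasurableSpace 𝒳] [MeasurableSingletonClass 𝒳]
    [Fintype 𝒳] [Nonempty 𝒳]
    (C : Θ → 𝒳 → Prop) [∀ θ c, Decidable (C θ c)]
    (hCmeas : ∀ c, MeasurableSet {θ | C θ c})
    (hCne : ∀ θ, ∃ c, C θ c)
    (π : Measure Θ) [IsFiniteMeasure π]
    (L : 𝒳 → ℝ≥0∞) (hL : ∀ c, L c = π {θ | C θ c}) (hLpos : ∀ c, 0 < L c)
    (pstar : Measure (Θ × 𝒳)) [IsProbabilityMeasure pstar]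
    (hpstar : ∀ (A : Set Θ) (c : 𝒳), MeasurableSet A →
        pstar (A ×ˢ ({c} : Set 𝒳)) = π (A ∩ {θ | C θ c}) / ∑ c', L c')
    (T₂ : Θ × 𝒳 → Measure (Θ × 𝒳))
    (hT₂ : ∀ q : Θ × 𝒳, T₂ q = (Measure.dirac q.1).prod
        (((Finset.univ.filter (fun c => C q.1 c)).card : ℝ≥0∞)⁻¹ •
          ∑ c ∈ Finset.univ.filter (fun c => C q.1 c), Measure.dirac c)) :
    pstar.bind T₂ = pstar := by
  classical
  set Z : ℝ≥0∞ := ∑ c', L c' with hZ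
  set n : Θ → ℝ≥0∞ := fun θ => ((Finset.univ.filter (fun c => C θ c)).card : ℝ≥0∞) with hn
  have hn_sum : ∀ θ, n θ = ∑ c : 𝒳, (if C θ c then (1:ℝ≥0∞) else 0) := by
    intro θ
    show ((Finset.univ.filter (fun c => C θ c)).card : ℝ≥0∞) = _
    rw [Finset.card_filter, Nat.cast_sum]
    exact Finset.sum_congr rfl fun c _ => by split <;> simp
  have hn_meas : Measurable n := by
    have : n = fun θ => ∑ c : 𝒳, (if C θ c then (1:ℝ≥0∞) else 0) := funext hn_sum
    rw [this]
    exact Finset.measurable_sum _ fun c _ =>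
      Measurable.ite (hCmeas c) measurable_const measurable_const
  have hn_ne_zero : ∀ θ, n θ ≠ 0 := by
    intro θ
    obtain ⟨c, hc⟩ := hCne θ
    have : c ∈ Finset.univ.filter (fun c => C θ c) := by simp [hc]
    simp only [hn, ne_eq, Nat.cast_eq_zero, Finset.card_eq_zero]
    intro h
    rw [h] at this
    exact absurd this (Finset.notMem_empty c)
  have hn_ne_top : ∀ θ, n θ ≠ ∞ := fun θ => ENNReal.natCast_ne_top _
  -- compute T₂ on measurable sets
  have key : ∀ (q : Θ × 𝒳) (s : Set (Θ × 𝒳)), MeasurableSet s →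
      T₂ q s = (n q.1)⁻¹ *
        ∑ c : 𝒳, (if C q.1 c ∧ (q.1, c) ∈ s then (1:ℝ≥0∞) else 0) := by
    intro q s hs
    rw [hT₂ q, Measure.prod_apply hs,
      lintegral_dirac' _ (measurable_measure_prodMk_left hs)]
    rw [Measure.smul_apply, smul_eq_mul]
    rw [Measure.finset_sum_apply]
    congr 1
    rw [Finset.sum_filter]
    refine Finset.sum_congr rfl fun c _ => ?_
    rw [Measure.dirac_apply' _ (measurable_prodMk_left hs)]
    by_cases h1 : C q.1 c <;> by_cases h2 : (q.1, c) ∈ s <;>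
      simp [h1, h2, Set.indicator_apply]
  have hT₂meas : Measurable T₂ := by
    apply Measure.measurable_of_measurable_coe
    intro s hs
    simp only [fun q => key q s hs]
    refine Measurable.mul ((hn_meas.comp measurable_fst).inv) ?_
    refine Finset.measurable_sum _ fun c _ => ?_
    refine Measurable.ite ?_ measurable_const measurable_const
    have : {q : Θ × 𝒳 | C q.1 c ∧ (q.1, c) ∈ s} =
        Prod.fst ⁻¹' ({θ | C θ c} ∩ ((fun θ => (θ, c)) ⁻¹' s)) := by
      ext q; simp [Set.mem_preimage]
    rw [this]
    exact measurable_fst ((hCmeas c).inter (measurable_prodMk_right hs))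
  -- T₂ on rectangles
  have keyrect : ∀ (q : Θ × 𝒳) (A : Set Θ) (c : 𝒳), MeasurableSet A →
      T₂ q (A ×ˢ ({c} : Set 𝒳)) =
        Set.indicator (A ∩ {θ | C θ c}) (fun θ => (n θ)⁻¹) q.1 := by
    intro q A c hA
    rw [key q _ (hA.prod (measurableSet_singleton c))]
    simp only [Set.mem_prod, Set.mem_singleton_iff]
    by_cases h2 : q.1 ∈ A
    · by_cases h1 : C q.1 c
      · have hone : (∑ x : 𝒳, if C q.1 x then (if x = c then (1:ℝ≥0∞) else 0) else 0) = 1 := by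
          rw [Finset.sum_eq_single c]
          · simp [h1]
          · intro b _ hb; simp [hb]
          · simp
        simp [h2, h1, and_comm, ite_and, hone, Set.indicator_apply]
      · simp only [h2, h1, and_comm, ite_and, Set.indicator_apply]
        have : (q.1 ∈ A ∩ {θ | C θ c}) = False := by simp [h1]
        simp [this, h1]
        exact Or.inr fun x hx hxc => h1 (hxc ▸ hx)
    · simp [h2, Set.indicator_apply]
  -- the first marginal of pstar
  have hmap : pstar.map Prod.fst = Z⁻¹ • π.withDensity n := by
    refine Measure.ext fun A hA => ?_
    rw [Measure.map_apply measurable_fst hA]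
    have hpre : Prod.fst ⁻¹' A = A ×ˢ (Set.univ : Set 𝒳) := by ext q; simp
    rw [hpre, deepR_slice_decomp pstar (hA.prod MeasurableSet.univ)]
    have hsl : ∀ c : 𝒳, ((fun θ => (θ, c)) ⁻¹' (A ×ˢ (Set.univ : Set 𝒳))) = A := by
      intro c; ext θ; simp
    simp only [hsl]
    have : ∀ c : 𝒳, pstar (A ×ˢ ({c} : Set 𝒳)) = Z⁻¹ * π (A ∩ {θ | C θ c}) := by
      intro c
      rw [hpstar A c hA, div_eq_mul_inv, mul_comm]
    simp only [this]
    rw [← Finset.mul_sum, Measure.smul_apply, smul_eq_mul, withDensity_apply _ hA]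
    congr 1
    have : ∀ᵐ θ ∂π, θ ∈ A → n θ = ∑ c : 𝒳, Set.indicator {θ | C θ c} (fun _ => (1:ℝ≥0∞)) θ := by
      filter_upwards with θ _
      rw [hn_sum θ]
      exact Finset.sum_congr rfl fun c _ => by simp [Set.indicator_apply]
    rw [setLIntegral_congr_fun_ae hA this]
    rw [lintegral_finset_sum]
    · refine (Finset.sum_congr rfl fun c _ => ?_).symm
      simp only [lintegral_indicator (hCmeas c)]
      rw [setLIntegral_one, Measure.restrict_apply (hCmeas c), Set.inter_comm]
    · exact fun c _ => (measurable_const.indicator (hCmeas c))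
  -- main claim on rectangles
  have main : ∀ (A : Set Θ) (c : 𝒳), MeasurableSet A →
      ∫⁻ q, T₂ q (A ×ˢ ({c} : Set 𝒳)) ∂pstar = pstar (A ×ˢ ({c} : Set 𝒳)) := by
    intro A c hA
    have hgmeas : Measurable (Set.indicator (A ∩ {θ | C θ c}) (fun θ => (n θ)⁻¹)) :=
      (hn_meas.inv).indicator (hA.inter (hCmeas c))
    calc ∫⁻ q, T₂ q (A ×ˢ ({c} : Set 𝒳)) ∂pstar
        = ∫⁻ q, Set.indicator (A ∩ {θ | C θ c}) (fun θ => (n θ)⁻¹) q.1 ∂pstar := by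
          exact lintegral_congr fun q => keyrect q A c hA
      _ = ∫⁻ θ, Set.indicator (A ∩ {θ | C θ c}) (fun θ => (n θ)⁻¹) θ ∂(pstar.map Prod.fst) := by
          rw [lintegral_map hgmeas measurable_fst]
      _ = Z⁻¹ * ∫⁻ θ, n θ * Set.indicator (A ∩ {θ | C θ c}) (fun θ => (n θ)⁻¹) θ ∂π := by
          rw [hmap, lintegral_smul_measure]
          congr 1
          rw [lintegral_withDensity_eq_lintegral_mul π hn_meas hgmeas]
          rfl
      _ = Z⁻¹ * π (A ∩ {θ | C θ c}) := by
          congr 1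
          have : (fun θ => n θ * Set.indicator (A ∩ {θ | C θ c}) (fun θ => (n θ)⁻¹) θ)
              = Set.indicator (A ∩ {θ | C θ c}) (1 : Θ → ℝ≥0∞) := by
            funext θ
            by_cases h : θ ∈ A ∩ {θ | C θ c}
            · simp [Set.indicator_of_mem h, ENNReal.mul_inv_cancel (hn_ne_zero θ) (hn_ne_top θ)]
            · simp [Set.indicator_of_notMem h]
          simp only [this]
          rw [lintegral_indicator_one (hA.inter (hCmeas c))]
      _ = pstar (A ×ˢ ({c} : Set 𝒳)) := by
          rw [hpstar A c hA, div_eq_mul_inv, mul_comm]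
  -- put everything together
  refine Measure.ext fun s hs => ?_
  rw [Measure.bind_apply hs hT₂meas.aemeasurable]
  rw [deepR_slice_decomp pstar hs]
  have : ∀ q : Θ × 𝒳, T₂ q s =
      ∑ c : 𝒳, T₂ q (((fun θ => (θ, c)) ⁻¹' s) ×ˢ ({c} : Set 𝒳)) :=
    fun q => deepR_slice_decomp (T₂ q) hs
  rw [lintegral_congr this, lintegral_finset_sum]
  · exact Finset.sum_congr rfl fun c _ => main _ c (measurable_prodMk_right hs)
  · intro c _
    exact (Measure.measurable_coe ((measurable_prodMk_right hs).prod
      (measurableSet_singleton c))).comp hT₂meas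
end

section
/- Let Θ be a measurable space, let 𝒳 be a finite nonempty set, and let C : Θ → 𝒳 → Prop be such that {θ : C θ c} is measurable for each c ∈ 𝒳. Let π be a finite measure on Θ with L(c) := π({θ : C θ c}) > 0 for every c ∈ 𝒳, and for c ∈ 𝒳 let ν_c be the probability measure ν_c(A) = π(A ∩ {θ : C θ c}) / L(c). Let κ : 𝒳 → Kernel(Θ, Θ) be any family of Markov kernels such that ν_c is invariant under κ(c) for every c ∈ 𝒳. Define the probability measure p* on Θ × 𝒳 by p*(A × {c}) = π(A ∩ {θ : C θ c}) / (Σ_{c' ∈ 𝒳} L(c')), and define the Markov kernel T₁ on Θ × 𝒳 by T₁(θ', c') = (κ(c')(θ')) ⊗ δ_{c'} (i.e., the parameter component evolves under the kernel associated with the current constraint while the constraint component is kept fixed). Then p* is invariant under T₁, i.e., p*.bind(T₁) = p*. -/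
open MeasureTheory ProbabilityTheory
open scoped ENNReal

/-- **Invariance of the joint stationary distribution under the parameter-update
operator.**  `Θ` is the parameter space, `𝒳` the finite nonempty set of connectivity
constraints, `C θ c` the compatibility predicate, `π` the (unnormalized tempered
posterior) finite measure with `L c = π {θ | C θ c} > 0`, `ν c` the conditioned
posterior `(L c)⁻¹ • π.restrict {θ | C θ c}`, and `κ c` a Markov kernel leaving
`ν c` invariant.  The joint measure `pstar`, characterized on rectangles by
`pstar (A ×ˢ {c}) = π (A ∩ {θ | C θ c}) / ∑ c', L c'`, is invariant under the
parameter-update kernel `T₁ (θ', c') = (κ c' θ') ⊗ δ_{c'}`. -/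
theorem deepR_parameter_update_operator_invariance
    {Θ 𝒳 : Type*} [MeasurableSpace Θ] [MeasurableSpace 𝒳] [MeasurableSingletonClass 𝒳]
    [Fintype 𝒳] [Nonempty 𝒳]
    (C : Θ → 𝒳 → Prop)
    (hCmeas : ∀ c, MeasurableSet {θ | C θ c})
    (π : Measure Θ) [IsFiniteMeasure π]
    (L : 𝒳 → ℝ≥0∞) (hL : ∀ c, L c = π {θ | C θ c}) (hLpos : ∀ c, 0 < L c)
    (ν : 𝒳 → Measure Θ) (hν : ∀ c, ν c = (L c)⁻¹ • π.restrict {θ | C θ c})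
    (κ : 𝒳 → Kernel Θ Θ) [∀ c, IsMarkovKernel (κ c)]
    (hinv : ∀ c, (ν c).bind (κ c) = ν c)
    (pstar : Measure (Θ × 𝒳)) [IsProbabilityMeasure pstar]
    (hpstar : ∀ (A : Set Θ) (c : 𝒳), MeasurableSet A →
        pstar (A ×ˢ ({c} : Set 𝒳)) = π (A ∩ {θ | C θ c}) / ∑ c', L c')
    (T₁ : Θ × 𝒳 → Measure (Θ × 𝒳))
    (hT₁ : ∀ q : Θ × 𝒳, T₁ q = (κ q.2 q.1).prod (Measure.dirac q.2)) :
    pstar.bind T₁ = pstar := by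
  classical
  have hLtop : ∀ c, L c ≠ ∞ := fun c => by rw [hL c]; exact (measure_lt_top π _).ne
  have hLne : ∀ c, L c ≠ 0 := fun c => (hLpos c).ne'
  set S : ℝ≥0∞ := ∑ c', L c' with hSdef
  -- Measurability of T₁
  have hT₁meas : Measurable T₁ := by
    rw [Measure.measurable_measure]
    intro s hs
    have hrw : (fun q : Θ × 𝒳 => T₁ q s)
        = fun q => ∑ c, if q.2 = c then
            (((κ c) ×ₖ (Kernel.const Θ (Measure.dirac c))) q.1) s else 0 := by
      funext q
      rw [hT₁, Finset.sum_eq_single q.2]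
      · rw [if_pos rfl, Kernel.prod_apply, Kernel.const_apply]
      · intro b _ hb; exact if_neg (Ne.symm hb)
      · intro h; exact absurd (Finset.mem_univ _) h
    rw [hrw]
    refine Finset.measurable_sum _ fun c _ => Measurable.ite ?_ ?_ measurable_const
    · exact measurable_snd (measurableSet_singleton c)
    · exact (Kernel.measurable_coe _ hs).comp measurable_fst
  -- the key computation on slices
  have key : ∀ (A : Set Θ) (c : 𝒳), MeasurableSet A →
      (pstar.bind T₁) (A ×ˢ ({c} : Set 𝒳)) = pstar (A ×ˢ ({c} : Set 𝒳)) := by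
    intro A c hA
    have hslice : MeasurableSet ((Set.univ : Set Θ) ×ˢ ({c} : Set 𝒳)) :=
      MeasurableSet.univ.prod (measurableSet_singleton c)
    have hmapfst : (pstar.restrict (Set.univ ×ˢ ({c} : Set 𝒳))).map Prod.fst
        = ((L c) / S) • ν c := by
      ext B hB
      rw [Measure.map_apply measurable_fst hB,
        Measure.restrict_apply (measurable_fst hB)]
      have hBe : (Prod.fst ⁻¹' B) ∩ (Set.univ ×ˢ ({c} : Set 𝒳)) = B ×ˢ ({c} : Set 𝒳) := by
        ext ⟨θ, d⟩
        simp only [Set.mem_inter_iff, Set.mem_preimage, Set.mem_prod, Set.mem_univ,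
          Set.mem_singleton_iff, true_and, and_comm]
      rw [hBe, hpstar B c hB, hν c]
      simp only [Measure.smul_apply, smul_eq_mul, Measure.restrict_apply hB]
      rw [div_eq_mul_inv, div_eq_mul_inv,
        show L c * S⁻¹ * ((L c)⁻¹ * π (B ∩ {θ | C θ c}))
          = (L c * (L c)⁻¹) * (π (B ∩ {θ | C θ c}) * S⁻¹) by ring,
        ENNReal.mul_inv_cancel (hLne c) (hLtop c), one_mul]
    rw [Measure.bind_apply (hA.prod (measurableSet_singleton c)) hT₁meas.aemeasurable]
    have hpoint : (fun q : Θ × 𝒳 => T₁ q (A ×ˢ ({c} : Set 𝒳)))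
        = (Set.univ ×ˢ ({c} : Set 𝒳)).indicator (fun q => κ c q.1 A) := by
      funext q
      obtain ⟨θ, d⟩ := q
      rw [hT₁, Measure.prod_prod, Measure.dirac_apply]
      by_cases h : d = c
      · simp [Set.indicator, Set.mem_prod, h]
      · simp [Set.indicator, Set.mem_prod, h, Ne.symm h]
    rw [hpoint, lintegral_indicator hslice]
    have hset : ∫⁻ q in Set.univ ×ˢ ({c} : Set 𝒳), κ c q.1 A ∂pstar
        = ∫⁻ θ, κ c θ A ∂((pstar.restrict (Set.univ ×ˢ ({c} : Set 𝒳))).map Prod.fst) := by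
      rw [lintegral_map (Kernel.measurable_coe (κ c) hA) measurable_fst]
    rw [hset, hmapfst, lintegral_smul_measure]
    have hbind : ∫⁻ θ, κ c θ A ∂(ν c) = ν c A := by
      conv_rhs => rw [← hinv c]
      rw [Measure.bind_apply hA (κ c).measurable.aemeasurable]
    rw [hbind, hν c, hpstar A c hA]
    simp only [Measure.smul_apply, smul_eq_mul, Measure.restrict_apply hA]
    rw [div_eq_mul_inv, div_eq_mul_inv,
      show L c * S⁻¹ * ((L c)⁻¹ * π (A ∩ {θ | C θ c}))
        = (L c * (L c)⁻¹) * (π (A ∩ {θ | C θ c}) * S⁻¹) by ring,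
      ENNReal.mul_inv_cancel (hLne c) (hLtop c), one_mul]
  -- extend to all rectangles
  have hrect : ∀ (A : Set Θ) (B : Set 𝒳), MeasurableSet A →
      (pstar.bind T₁) (A ×ˢ B) = pstar (A ×ˢ B) := by
    intro A B hA
    have hBfin : B.Finite := B.toFinite
    have hsplit : A ×ˢ B = ⋃ c ∈ hBfin.toFinset, A ×ˢ ({c} : Set 𝒳) := by
      ext q
      simp only [Set.mem_prod, Set.mem_iUnion, Set.Finite.mem_toFinset,
        Set.mem_singleton_iff]
      constructor
      · rintro ⟨h1, h2⟩; exact ⟨q.2, h2, h1, rfl⟩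
      · rintro ⟨c, hc, h1, h2⟩; exact ⟨h1, h2 ▸ hc⟩
    have hdisj : (↑hBfin.toFinset : Set 𝒳).PairwiseDisjoint
        (fun c => A ×ˢ ({c} : Set 𝒳)) := by
      intro c _ d _ hcd
      refine Set.disjoint_left.2 ?_
      rintro q ⟨_, hq1⟩ ⟨_, hq2⟩
      exact hcd (hq1.symm.trans hq2)
    have hmeas : ∀ c ∈ hBfin.toFinset, MeasurableSet (A ×ˢ ({c} : Set 𝒳)) :=
      fun c _ => hA.prod (measurableSet_singleton c)
    rw [hsplit, measure_biUnion_finset hdisj hmeas, measure_biUnion_finset hdisj hmeas]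
    exact Finset.sum_congr rfl fun c _ => key A c hA
  have huniv : (pstar.bind T₁) Set.univ = pstar Set.univ := by
    rw [Measure.bind_apply MeasurableSet.univ hT₁meas.aemeasurable]
    have h1 : ∀ q : Θ × 𝒳, T₁ q Set.univ = 1 := fun q => by
      rw [hT₁]; exact measure_univ
    simp [h1]
  have : IsFiniteMeasure (pstar.bind T₁) :=
    ⟨by rw [huniv]; exact measure_lt_top _ _⟩
  refine ext_of_generate_finite _ generateFrom_prod.symm isPiSystem_prod ?_ huniv
  rintro s ⟨A, hA, B, hB, rfl⟩
  exact hrect A B hA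
end
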